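/- Let λ be an integer partition of n and T any standard Young tableau of shape λ. Then b(λ) ≤ maj(T) ≤ n(n−1)/2 − ∑_{i=1}^{ℓ(λ)} λ_i(λ_i − 1)/2, where b(λ) = ∑_{i=1}^{ℓ(λ)} (i−1)λ_i. -/

import Mathlib

open Finset
open scoped Classical

/-- A standard tableau of shape `μ ⊢ n`: a bijective filling of the cells by
`Fin n` (value `k` standing for the entry `k+1`), strictly increasing along
rows and columns. -/
def IsStandard (μ : YoungDiagram) (T : μ.cells → Fin μ.card) : Prop :=
  Function.Bijective T ∧
    (∀ c c' : μ.cells, (c : ℕ × ℕ).1 = (c' : ℕ × ℕ).1 →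
      (c : ℕ × ℕ).2 < (c' : ℕ × ℕ).2 → T c < T c') ∧
    (∀ c c' : μ.cells, (c : ℕ × ℕ).2 = (c' : ℕ × ℕ).2 →
      (c : ℕ × ℕ).1 < (c' : ℕ × ℕ).1 → T c < T c')

/-- The major index of a tableau: the sum of the descents. -/
noncomputable def maj (μ : YoungDiagram) (T : μ.cells → Fin μ.card) : ℕ :=
  ∑ k ∈ Finset.range μ.card,
    if ∃ c c' : μ.cells, (T c : ℕ) + 1 = k ∧ (T c' : ℕ) + 1 = k + 1 ∧
        (c : ℕ × ℕ).1 < (c' : ℕ × ℕ).1 then k else 0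

/-- `b(λ) = ∑_{i ≥ 1} (i-1) λ_i` (rows indexed from `0` here, so `∑ i·λ_{i+1}`). -/
def bstat (μ : YoungDiagram) : ℕ :=
  ∑ i ∈ Finset.range μ.card, i * μ.rowLen i

/- ### Auxiliary lemmas -/

/-- If `f u < f v` then some step in `(u, v]` strictly increases `f`. -/
lemma chain_desc (f : ℕ → ℕ) : ∀ v u, u < v → f u < f v →
    ∃ k, u < k ∧ k ≤ v ∧ f (k - 1) < f k := by
  intro v
  induction v with
  | zero => intro u h; omega
  | succ v ih =>
    intro u hu hf
    by_cases h : f v < f (v + 1)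
    · exact ⟨v + 1, hu, le_refl _, by simpa using h⟩
    · have huv : u < v := by
        rcases Nat.lt_succ_iff_lt_or_eq.mp hu with h' | h'
        · exact h'
        · exact absurd hf (h' ▸ h)
      have hfv : f u < f v := lt_of_lt_of_le hf (not_lt.mp h)
      obtain ⟨k, hk1, hk2, hk3⟩ := ih u huv hfv
      exact ⟨k, hk1, Nat.le_succ_of_le hk2, hk3⟩

/-- If `¬ f u < f v` then some step in `(u, v]` does not strictly increase `f`. -/
lemma chain_asc (f : ℕ → ℕ) : ∀ v u, u < v → ¬ f u < f v →
    ∃ k, u < k ∧ k ≤ v ∧ ¬ f (k - 1) < f k := by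
  intro v
  induction v with
  | zero => intro u h; omega
  | succ v ih =>
    intro u hu hf
    by_cases h : f v < f (v + 1)
    · have huv : u < v := by
        rcases Nat.lt_succ_iff_lt_or_eq.mp hu with h' | h'
        · exact h'
        · exact absurd (h' ▸ h) hf
      have hfv : ¬ f u < f v := by
        intro hc
        exact hf (hc.trans h)
      obtain ⟨k, hk1, hk2, hk3⟩ := ih u huv hfv
      exact ⟨k, hk1, Nat.le_succ_of_le hk2, hk3⟩
    · exact ⟨v + 1, hu, le_refl _, by simpa using h⟩

/-- Counting lemma: an injection `a ↦ (m, k)` with `1 ≤ m ≤ k < n` and `P k`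
bounds `S.card` by `∑_{k < n, P k} k`. -/
lemma card_le_sum_filter {α : Type*} (n : ℕ) (P : ℕ → Prop) [DecidablePred P]
    (S : Finset α) (g : α → ℕ × ℕ)
    (hinj : Set.InjOn g S)
    (h : ∀ a ∈ S, 1 ≤ (g a).1 ∧ (g a).1 ≤ (g a).2 ∧ (g a).2 < n ∧ P (g a).2) :
    S.card ≤ ∑ k ∈ (Finset.range n).filter P, k := by
  classical
  have hcard : S.card ≤ (((Finset.range n).filter P).sigma fun k => Finset.Icc 1 k).card := by
    apply Finset.card_le_card_of_injOn (fun a => ⟨(g a).2, (g a).1⟩)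
    · intro a ha
      obtain ⟨h1, h2, h3, h4⟩ := h a ha
      show (⟨(g a).2, (g a).1⟩ : Σ _ : ℕ, ℕ) ∈ (((Finset.range n).filter P).sigma fun k => Finset.Icc 1 k)
      simp only [Finset.mem_sigma, Finset.mem_filter, Finset.mem_range, Finset.mem_Icc]
      exact ⟨⟨h3, h4⟩, h1, h2⟩
    · intro a ha b hb hab
      apply hinj ha hb
      have h1 : (g a).2 = (g b).2 := congrArg Sigma.fst hab
      have h2 : (g a).1 = (g b).1 := by
        have := congrArg (fun x : Σ _ : ℕ, ℕ => x.2) hab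
        simpa using this
      exact Prod.ext h2 h1
  calc S.card ≤ _ := hcard
    _ = ∑ k ∈ (Finset.range n).filter P, k := by
        rw [Finset.card_sigma]
        exact Finset.sum_congr rfl fun k _ => by simp [Nat.card_Icc]

lemma cell_lt (μ : YoungDiagram) {i j : ℕ} (h : (i, j) ∈ μ) :
    i < μ.card ∧ j < μ.card := by
  constructor
  · have h1 : i < μ.colLen j := YoungDiagram.mem_iff_lt_colLen.mp h
    have h2 : μ.colLen j ≤ μ.card := by
      rw [YoungDiagram.colLen_eq_card]
      exact Finset.card_le_card fun c hc =>
        (YoungDiagram.mem_cells _).mpr (YoungDiagram.mem_col_iff.mp hc).1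
    omega
  · have h1 : j < μ.rowLen i := YoungDiagram.mem_iff_lt_rowLen.mp h
    have h2 : μ.rowLen i ≤ μ.card := by
      rw [YoungDiagram.rowLen_eq_card]
      exact Finset.card_le_card fun c hc =>
        (YoungDiagram.mem_cells _).mpr (YoungDiagram.mem_row_iff.mp hc).1
    omega

lemma sum_cells {M : Type*} [AddCommMonoid M] (μ : YoungDiagram) (F : ℕ × ℕ → M) :
    ∑ c ∈ μ.cells, F c = ∑ i ∈ Finset.range μ.card, ∑ j ∈ Finset.range (μ.rowLen i), F (i, j) := by
  classical
  have hset : μ.cells = (Finset.range μ.card).biUnion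
      (fun i => {i} ×ˢ Finset.range (μ.rowLen i)) := by
    ext c
    obtain ⟨i, j⟩ := c
    simp only [Finset.mem_biUnion, Finset.mem_range, Finset.mem_product, Finset.mem_singleton,
      YoungDiagram.mem_cells]
    constructor
    · intro h
      exact ⟨i, (cell_lt μ h).1, rfl, YoungDiagram.mem_iff_lt_rowLen.mp h⟩
    · rintro ⟨i', _, rfl, hj⟩
      exact YoungDiagram.mem_iff_lt_rowLen.mpr hj
  rw [hset, Finset.sum_biUnion]
  · apply Finset.sum_congr rfl
    intro i _
    rw [Finset.sum_product, Finset.sum_singleton]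
  · intro x _ y _ hxy
    simp only [Function.onFun]
    rw [Finset.disjoint_left]
    rintro ⟨a, b⟩ hab hab'
    simp only [Finset.mem_product, Finset.mem_singleton] at hab hab'
    exact hxy (hab.1.symm.trans hab'.1)

lemma gauss (m : ℕ) : ∑ j ∈ Finset.range m, (j : ℚ) = (m : ℚ) * ((m : ℚ) - 1) / 2 := by
  induction m with
  | zero => simp
  | succ k ih =>
    rw [Finset.sum_range_succ, ih]
    push_cast
    ring

/-- For any standard tableau `T` of shape `μ ⊢ n`,
`b(μ) ≤ maj(T) ≤ n(n-1)/2 - ∑_i λ_i(λ_i - 1)/2`. -/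
theorem maj_range (μ : YoungDiagram) (n : ℕ) (hn : μ.card = n)
    (T : μ.cells → Fin μ.card) (hT : IsStandard μ T) :
    bstat μ ≤ maj μ T ∧
      (maj μ T : ℚ) ≤ (n : ℚ) * ((n : ℚ) - 1) / 2 -
        ∑ i ∈ Finset.range n, (μ.rowLen i : ℚ) * ((μ.rowLen i : ℚ) - 1) / 2 := by
  subst hn
  obtain ⟨hbij, hrow, hcol⟩ := hT
  -- the positions of the values
  let e : μ.cells ≃ Fin μ.card := Equiv.ofBijective T hbij
  let f : ℕ → ℕ := fun m => if h : m < μ.card then ((e.symm ⟨m, h⟩ : μ.cells) : ℕ × ℕ).1 else 0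
  have hfdef : ∀ (m : ℕ) (h : m < μ.card), f m = ((e.symm ⟨m, h⟩ : μ.cells) : ℕ × ℕ).1 :=
    fun m h => dif_pos h
  have hfT : ∀ c : μ.cells, f ((T c : ℕ)) = (c : ℕ × ℕ).1 := by
    intro c
    rw [hfdef _ (T c).isLt]
    have h1 : (⟨(T c : ℕ), (T c).isLt⟩ : Fin μ.card) = T c := Fin.eta _ _
    have h2 : e.symm ⟨(T c : ℕ), (T c).isLt⟩ = c := by
      rw [h1]; exact e.symm_apply_apply c
    rw [h2]
  -- the descent predicate
  set Q : ℕ → Prop := fun k => 0 < k ∧ f (k - 1) < f k with hQ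
  have hDiff : ∀ k ∈ Finset.range μ.card,
      ((∃ c c' : μ.cells, (T c : ℕ) + 1 = k ∧ (T c' : ℕ) + 1 = k + 1 ∧
        (c : ℕ × ℕ).1 < (c' : ℕ × ℕ).1) ↔ Q k) := by
    intro k hk
    rw [Finset.mem_range] at hk
    constructor
    · rintro ⟨c, c', hc, hc', hlt⟩
      refine ⟨by omega, ?_⟩
      have h1 : (T c : ℕ) = k - 1 := by omega
      have h2 : (T c' : ℕ) = k := by omega
      rw [← h1, ← h2, hfT c, hfT c']
      exact hlt
    · rintro ⟨hk0, hlt⟩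
      have hk1 : k - 1 < μ.card := by omega
      refine ⟨e.symm ⟨k - 1, hk1⟩, e.symm ⟨k, hk⟩, ?_, ?_, ?_⟩
      · have : T (e.symm ⟨k - 1, hk1⟩) = ⟨k - 1, hk1⟩ := e.apply_symm_apply _
        rw [this]
        show k - 1 + 1 = k
        omega
      · have : T (e.symm ⟨k, hk⟩) = ⟨k, hk⟩ := e.apply_symm_apply _
        rw [this]
      · rw [← hfdef _ hk1, ← hfdef _ hk]
        exact hlt
  have hmaj : maj μ T = ∑ k ∈ (Finset.range μ.card).filter Q, k := by
    rw [maj, Finset.sum_filter]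
    exact Finset.sum_congr rfl fun k hk => if_congr (hDiff k hk) rfl rfl
  -- monotonicity of T along rows/columns, weak versions
  have hcolle : ∀ c c' : μ.cells, (c : ℕ × ℕ).2 = (c' : ℕ × ℕ).2 →
      (c : ℕ × ℕ).1 ≤ (c' : ℕ × ℕ).1 → (T c : ℕ) ≤ (T c' : ℕ) := by
    intro c c' hj hi
    rcases eq_or_lt_of_le hi with heq | hlt
    · have : c = c' := Subtype.ext (Prod.ext heq hj)
      rw [this]
    · exact le_of_lt (hcol c c' hj hlt)
  have hrowle : ∀ c c' : μ.cells, (c : ℕ × ℕ).1 = (c' : ℕ × ℕ).1 →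
      (c : ℕ × ℕ).2 ≤ (c' : ℕ × ℕ).2 → (T c : ℕ) ≤ (T c' : ℕ) := by
    intro c c' hj hi
    rcases eq_or_lt_of_le hi with heq | hlt
    · have : c = c' := Subtype.ext (Prod.ext hj heq)
      rw [this]
    · exact le_of_lt (hrow c c' hj hlt)
  constructor
  · -- lower bound
    set Dom : Finset (Σ _ : ℕ × ℕ, ℕ) := μ.cells.sigma fun c => Finset.range c.1 with hDom
    have keyL : ∀ a : Σ _ : ℕ × ℕ, ℕ, ∃ p : ℕ × ℕ, a ∈ Dom →
        ∃ (hc : a.1 ∈ μ.cells) (hup : (a.2, a.1.2) ∈ μ.cells)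
          (hpr : (a.1.1 - 1, a.1.2) ∈ μ.cells),
          p.1 = (T ⟨(a.2, a.1.2), hup⟩ : ℕ) + 1 ∧
          (T ⟨(a.1.1 - 1, a.1.2), hpr⟩ : ℕ) < p.2 ∧ p.2 ≤ (T ⟨a.1, hc⟩ : ℕ) ∧
          1 ≤ p.1 ∧ p.1 ≤ p.2 ∧ p.2 < μ.card ∧ Q p.2 := by
      intro a
      by_cases ha : a ∈ Dom
      swap
      · exact ⟨(0, 0), fun h => absurd h ha⟩
      rw [hDom, Finset.mem_sigma, Finset.mem_range] at ha
      obtain ⟨hc, hia⟩ := ha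
      have hcm : a.1 ∈ μ := (YoungDiagram.mem_cells _).mp hc
      have hcm' : (a.1.1, a.1.2) ∈ μ := by rwa [Prod.mk.eta]
      have hup : (a.2, a.1.2) ∈ μ.cells :=
        (YoungDiagram.mem_cells _).mpr (μ.up_left_mem (le_of_lt hia) (le_refl _) hcm')
      have hpr : (a.1.1 - 1, a.1.2) ∈ μ.cells :=
        (YoungDiagram.mem_cells _).mpr (μ.up_left_mem (Nat.sub_le _ _) (le_refl _) hcm')
      have hwv : (T ⟨(a.1.1 - 1, a.1.2), hpr⟩ : ℕ) < (T ⟨a.1, hc⟩ : ℕ) := by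
        apply hcol
        · rfl
        · show a.1.1 - 1 < a.1.1
          omega
      have hfwv : f (T ⟨(a.1.1 - 1, a.1.2), hpr⟩ : ℕ) < f (T ⟨a.1, hc⟩ : ℕ) := by
        rw [hfT, hfT]
        show a.1.1 - 1 < a.1.1
        omega
      obtain ⟨k, hk1, hk2, hk3⟩ := chain_desc f _ _ hwv hfwv
      refine ⟨((T ⟨(a.2, a.1.2), hup⟩ : ℕ) + 1, k), fun _ => ⟨hc, hup, hpr, rfl, hk1, hk2, ?_, ?_, ?_, ?_⟩⟩
      · omega
      · have : (T ⟨(a.2, a.1.2), hup⟩ : ℕ) ≤ (T ⟨(a.1.1 - 1, a.1.2), hpr⟩ : ℕ) := by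
          apply hcolle
          · rfl
          · show a.2 ≤ a.1.1 - 1
            omega
        omega
      · have : k ≤ (T ⟨a.1, hc⟩ : ℕ) := hk2
        have := (T ⟨a.1, hc⟩).isLt
        omega
      · exact ⟨by omega, hk3⟩
    choose gL hgL using keyL
    have hble : bstat μ = Dom.card := by
      rw [hDom, Finset.card_sigma]
      simp only [Finset.card_range]
      rw [sum_cells μ (fun c => c.1)]
      unfold bstat
      apply Finset.sum_congr rfl
      intro i _
      simp [Finset.sum_const, mul_comm]
    rw [hble, hmaj]
    apply card_le_sum_filter μ.card Q Dom gL
    · intro a ha b hb hab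
      rw [Finset.mem_coe] at ha hb
      obtain ⟨hca, hupa, hpra, e1a, e2a, e3a, _, _, _, _⟩ := hgL _ ha
      obtain ⟨hcb, hupb, hprb, e1b, e2b, e3b, _, _, _, _⟩ := hgL _ hb
      have hfst : (gL a).1 = (gL b).1 := by rw [hab]
      have hsnd : (gL a).2 = (gL b).2 := by rw [hab]
      rw [e1a, e1b] at hfst
      have hTeq : T ⟨(a.snd, a.fst.2), hupa⟩ = T ⟨(b.snd, b.fst.2), hupb⟩ :=
        Fin.ext (by omega)
      have hcells : ((a.snd, a.fst.2) : ℕ × ℕ) = (b.snd, b.fst.2) :=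
        congrArg Subtype.val (hbij.1 hTeq)
      have ht : a.snd = b.snd := ((Prod.mk.injEq _ _ _ _).mp hcells).1
      have hj : a.fst.2 = b.fst.2 := ((Prod.mk.injEq _ _ _ _).mp hcells).2
      have hmain : ∀ (c : ℕ × ℕ) (i' j' : ℕ) (h1 : c ∈ μ.cells)
          (h2 : (i' - 1, j') ∈ μ.cells), c.2 = j' → c.1 < i' →
          ∀ x y : ℕ, x ≤ (T ⟨c, h1⟩ : ℕ) → (T ⟨(i' - 1, j'), h2⟩ : ℕ) < y → x < y := by
        intro c i' j' h1 h2 hcj hii x y hx hy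
        have : (T ⟨c, h1⟩ : ℕ) ≤ (T ⟨(i' - 1, j'), h2⟩ : ℕ) := by
          apply hcolle
          · exact hcj
          · show c.1 ≤ i' - 1
            omega
        omega
      have hi : a.fst.1 = b.fst.1 := by
        rcases Nat.lt_trichotomy a.fst.1 b.fst.1 with h | h | h
        · exfalso
          have := hmain a.fst b.fst.1 b.fst.2 hca hprb hj h
            (gL a).2 (gL b).2 e3a e2b
          omega
        · exact h
        · exfalso
          have := hmain b.fst a.fst.1 a.fst.2 hcb hpra hj.symm h
            (gL b).2 (gL a).2 e3b e2a
          omega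
      exact Sigma.ext (Prod.ext hi hj) (heq_of_eq ht)
    · intro a ha
      obtain ⟨_, _, _, _, _, _, b1, b2, b3, b4⟩ := hgL a ha
      exact ⟨b1, b2, b3, b4⟩
  · -- upper bound
    set Dom' : Finset (Σ _ : ℕ × ℕ, ℕ) := μ.cells.sigma fun c => Finset.range c.2 with hDom'
    set P : ℕ → Prop := fun k => ¬ Q k with hP
    have keyU : ∀ a : Σ _ : ℕ × ℕ, ℕ, ∃ p : ℕ × ℕ, a ∈ Dom' →
        ∃ (hc : a.1 ∈ μ.cells) (hup : (a.1.1, a.2) ∈ μ.cells)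
          (hpr : (a.1.1, a.1.2 - 1) ∈ μ.cells),
          p.1 = (T ⟨(a.1.1, a.2), hup⟩ : ℕ) + 1 ∧
          (T ⟨(a.1.1, a.1.2 - 1), hpr⟩ : ℕ) < p.2 ∧ p.2 ≤ (T ⟨a.1, hc⟩ : ℕ) ∧
          1 ≤ p.1 ∧ p.1 ≤ p.2 ∧ p.2 < μ.card ∧ P p.2 := by
      intro a
      by_cases ha : a ∈ Dom'
      swap
      · exact ⟨(0, 0), fun h => absurd h ha⟩
      rw [hDom', Finset.mem_sigma, Finset.mem_range] at ha
      obtain ⟨hc, hia⟩ := ha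
      have hcm : a.1 ∈ μ := (YoungDiagram.mem_cells _).mp hc
      have hcm' : (a.1.1, a.1.2) ∈ μ := by rwa [Prod.mk.eta]
      have hup : (a.1.1, a.2) ∈ μ.cells :=
        (YoungDiagram.mem_cells _).mpr (μ.up_left_mem (le_refl _) (le_of_lt hia) hcm')
      have hpr : (a.1.1, a.1.2 - 1) ∈ μ.cells :=
        (YoungDiagram.mem_cells _).mpr (μ.up_left_mem (le_refl _) (Nat.sub_le _ _) hcm')
      have hwv : (T ⟨(a.1.1, a.1.2 - 1), hpr⟩ : ℕ) < (T ⟨a.1, hc⟩ : ℕ) := by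
        apply hrow
        · rfl
        · show a.1.2 - 1 < a.1.2
          omega
      have hfwv : ¬ f (T ⟨(a.1.1, a.1.2 - 1), hpr⟩ : ℕ) < f (T ⟨a.1, hc⟩ : ℕ) := by
        rw [hfT, hfT]
        show ¬ a.1.1 < a.1.1
        omega
      obtain ⟨k, hk1, hk2, hk3⟩ := chain_asc f _ _ hwv hfwv
      refine ⟨((T ⟨(a.1.1, a.2), hup⟩ : ℕ) + 1, k), fun _ => ⟨hc, hup, hpr, rfl, hk1, hk2, ?_, ?_, ?_, ?_⟩⟩
      · omega
      · have : (T ⟨(a.1.1, a.2), hup⟩ : ℕ) ≤ (T ⟨(a.1.1, a.1.2 - 1), hpr⟩ : ℕ) := by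
          apply hrowle
          · rfl
          · show a.2 ≤ a.1.2 - 1
            omega
        omega
      · have : k ≤ (T ⟨a.1, hc⟩ : ℕ) := hk2
        have := (T ⟨a.1, hc⟩).isLt
        omega
      · exact fun hQk => hk3 hQk.2
    choose gU hgU using keyU
    have hcardU : (∑ c ∈ μ.cells, c.2) = Dom'.card := by
      rw [hDom', Finset.card_sigma]
      simp [Finset.card_range]
    have hBle : (∑ c ∈ μ.cells, c.2) ≤ ∑ k ∈ (Finset.range μ.card).filter P, k := by
      rw [hcardU]
      apply card_le_sum_filter μ.card P Dom' gU
      · intro a ha b hb hab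
        rw [Finset.mem_coe] at ha hb
        obtain ⟨hca, hupa, hpra, e1a, e2a, e3a, _, _, _, _⟩ := hgU _ ha
        obtain ⟨hcb, hupb, hprb, e1b, e2b, e3b, _, _, _, _⟩ := hgU _ hb
        have hfst : (gU a).1 = (gU b).1 := by rw [hab]
        have hsnd : (gU a).2 = (gU b).2 := by rw [hab]
        rw [e1a, e1b] at hfst
        have hTeq : T ⟨(a.fst.1, a.snd), hupa⟩ = T ⟨(b.fst.1, b.snd), hupb⟩ :=
          Fin.ext (by omega)
        have hcells : ((a.fst.1, a.snd) : ℕ × ℕ) = (b.fst.1, b.snd) :=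
          congrArg Subtype.val (hbij.1 hTeq)
        have ht : a.snd = b.snd := ((Prod.mk.injEq _ _ _ _).mp hcells).2
        have hi : a.fst.1 = b.fst.1 := ((Prod.mk.injEq _ _ _ _).mp hcells).1
        have hmain : ∀ (c : ℕ × ℕ) (i' j' : ℕ) (h1 : c ∈ μ.cells)
            (h2 : (i', j' - 1) ∈ μ.cells), c.1 = i' → c.2 < j' →
            ∀ x y : ℕ, x ≤ (T ⟨c, h1⟩ : ℕ) → (T ⟨(i', j' - 1), h2⟩ : ℕ) < y → x < y := by
          intro c i' j' h1 h2 hci hjj x y hx hy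
          have : (T ⟨c, h1⟩ : ℕ) ≤ (T ⟨(i', j' - 1), h2⟩ : ℕ) := by
            apply hrowle
            · exact hci
            · show c.2 ≤ j' - 1
              omega
          omega
        have hj : a.fst.2 = b.fst.2 := by
          rcases Nat.lt_trichotomy a.fst.2 b.fst.2 with h | h | h
          · exfalso
            have := hmain a.fst b.fst.1 b.fst.2 hca hprb hi h
              (gU a).2 (gU b).2 e3a e2b
            omega
          · exact h
          · exfalso
            have := hmain b.fst a.fst.1 a.fst.2 hcb hpra hi.symm h
              (gU b).2 (gU a).2 e3b e2a
            omega
        exact Sigma.ext (Prod.ext hi hj) (heq_of_eq ht)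
      · intro a ha
        obtain ⟨_, _, _, _, _, _, b1, b2, b3, b4⟩ := hgU a ha
        exact ⟨b1, b2, b3, b4⟩
    have hsplit : (∑ k ∈ (Finset.range μ.card).filter Q, k) + ∑ k ∈ (Finset.range μ.card).filter P, k
        = ∑ k ∈ Finset.range μ.card, k := by
      exact Finset.sum_filter_add_sum_filter_not _ _ _
    have htot : ((∑ k ∈ Finset.range μ.card, k : ℕ) : ℚ) = (μ.card : ℚ) * ((μ.card : ℚ) - 1) / 2 := by
      rw [← gauss μ.card]
      push_cast
      rfl
    have hrowsum : ((∑ c ∈ μ.cells, c.2 : ℕ) : ℚ)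
        = ∑ i ∈ Finset.range μ.card, (μ.rowLen i : ℚ) * ((μ.rowLen i : ℚ) - 1) / 2 := by
      push_cast
      rw [sum_cells μ (fun c => ((c.2 : ℕ) : ℚ))]
      exact Finset.sum_congr rfl fun i _ => gauss _
    rw [hmaj]
    have h1 : ((∑ k ∈ (Finset.range μ.card).filter Q, k : ℕ) : ℚ)
        = ((∑ k ∈ Finset.range μ.card, k : ℕ) : ℚ) - ((∑ k ∈ (Finset.range μ.card).filter P, k : ℕ) : ℚ) := by
      rw [← hsplit]
      push_cast
      ring
    rw [h1, htot, ← hrowsum]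
    have h2 : ((∑ c ∈ μ.cells, c.2 : ℕ) : ℚ) ≤ ((∑ k ∈ (Finset.range μ.card).filter P, k : ℕ) : ℚ) := by
      exact_mod_cast hBle
    linarith
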